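/- Suppose a sequence of MCI upper-bound functions u^{(i)} : ι → ℝ satisfies: (1) pointwise monotone non-increasing in i (u^{(i)}(z) ≥ u^{(j)}(z) for i ≤ j), (2) fixed after selection: if index z_i is selected at step i, then u^{(j)}(z_i) = u^{(i)}(z_i) for all j ≥ i, and (3) the simulated greedy sequence z'₁, ..., z'_K picks at each step j an index maximizing u^{(j)} among unselected indexes, and the two sequences {z_i} (actual greedy) and {z'_j} coincide up to some step s after which no u-value changes and the set {u^{(s)}(z'_s), ..., u^{(s)}(z'_K)} consists of the top remaining values of u^{(s)}. Then for the actual greedy sequence z₁, ..., z_k with k ≤ K, Σ_{i=1}^k u^{(i)}(z_i) ≤ Σ_{j=1}^K u^{(j)}(z'_j). -/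

import Mathlib

/-- Comparison of the actual greedy MCI sum with the simulated greedy MCI sum:
under pointwise monotonicity in the step index, the no-update-after-selection
property, agreement of the two sequences before step `s`, no updates from step
`s` on, and the greedy maximality of the simulated sequence from step `s` on,
`Σ_{i<k} u^{(i)}(z_i) ≤ Σ_{j<K} u^{(j)}(z'_j)`. -/
theorem stmt_10 {ι : Type*} [Fintype ι] [DecidableEq ι]
    (k K s : ℕ) (hkK : k ≤ K)
    (z : ℕ → ι) (z' : ℕ → ι)
    (hz : ∀ i j, i < k → j < k → z i = z j → i = j)
    (hz' : ∀ i j, i < K → j < K → z' i = z' j → i = j)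
    (hagree : ∀ i < s, z i = z' i)
    (u : ℕ → ι → ℝ)
    (hnonneg : ∀ i x, 0 ≤ u i x)
    (hmono : ∀ i j, i ≤ j → ∀ x, u j x ≤ u i x)
    (hfix : ∀ i j, i ≤ j → i < k → u j (z i) = u i (z i))
    (hfix' : ∀ i j, i ≤ j → i < K → u j (z' i) = u i (z' i))
    (hstable : ∀ j, s ≤ j → u j = u s)
    (hgreedy : ∀ j, s ≤ j → j < K → ∀ x : ι, (∀ i < j, x ≠ z' i) →
      u s x ≤ u s (z' j)) :
    ∑ i ∈ Finset.range k, u i (z i) ≤ ∑ j ∈ Finset.range K, u j (z' j) := by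
  have hsum_mono : ∀ (m n : ℕ), m ≤ n →
      ∑ j ∈ Finset.range m, u j (z' j) ≤ ∑ j ∈ Finset.range n, u j (z' j) := by
    intro m n hmn
    exact Finset.sum_le_sum_of_subset_of_nonneg (Finset.range_subset_range.2 hmn)
      (fun i _ _ => hnonneg i _)
  rcases le_or_gt k s with hks | hsk
  · calc ∑ i ∈ Finset.range k, u i (z i)
        = ∑ i ∈ Finset.range k, u i (z' i) := by
          refine Finset.sum_congr rfl fun i hi => ?_
          rw [hagree i (lt_of_lt_of_le (Finset.mem_range.1 hi) hks)]
      _ ≤ _ := hsum_mono k K hkK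
  · have hsk' : s ≤ k := hsk.le
    have hsK : s ≤ K := le_trans hsk' hkK
    rw [Finset.range_eq_Ico, ← Finset.sum_Ico_consecutive _ (Nat.zero_le s) hsk',
        Finset.range_eq_Ico, ← Finset.sum_Ico_consecutive (fun j => u j (z' j)) (Nat.zero_le s) hsK]
    refine add_le_add (le_of_eq ?_) ?_
    · refine Finset.sum_congr rfl fun i hi => ?_
      rw [hagree i (Finset.mem_Ico.1 hi).2]
    -- main part
    have hAeq : ∀ i ∈ Finset.Ico s k, u i (z i) = u s (z i) := fun i hi => by
      rw [hstable i (Finset.mem_Ico.1 hi).1]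
    have hBeq : ∀ j ∈ Finset.Ico s K, u j (z' j) = u s (z' j) := fun j hj => by
      rw [hstable j (Finset.mem_Ico.1 hj).1]
    rw [Finset.sum_congr rfl hAeq, Finset.sum_congr rfl hBeq]
    have hinjz : ∀ i ∈ Finset.Ico s k, ∀ j ∈ Finset.Ico s k, z i = z j → i = j :=
      fun i hi j hj h => hz i j (Finset.mem_Ico.1 hi).2 (Finset.mem_Ico.1 hj).2 h
    have hinjz' : ∀ i ∈ Finset.Ico s K, ∀ j ∈ Finset.Ico s K, z' i = z' j → i = j :=
      fun i hi j hj h => hz' i j (Finset.mem_Ico.1 hi).2 (Finset.mem_Ico.1 hj).2 h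
    rw [← Finset.sum_image hinjz, ← Finset.sum_image hinjz']
    set A := (Finset.Ico s k).image z with hA
    set B := (Finset.Ico s K).image z' with hB
    have hcard : A.card ≤ B.card := by
      rw [hA, hB, Finset.card_image_of_injOn (fun i hi j hj h => hinjz i hi j hj h),
        Finset.card_image_of_injOn (fun i hi j hj h => hinjz' i hi j hj h),
        Nat.card_Ico, Nat.card_Ico]
      omega
    have hle : ∀ x ∈ A \ B, ∀ y ∈ B, u s x ≤ u s y := by
      intro x hx y hy
      obtain ⟨hxA, hxB⟩ := Finset.mem_sdiff.1 hx
      obtain ⟨i, hi, rfl⟩ := Finset.mem_image.1 hxA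
      obtain ⟨j, hj, rfl⟩ := Finset.mem_image.1 hy
      obtain ⟨hsi, hik⟩ := Finset.mem_Ico.1 hi
      obtain ⟨hsj, hjK⟩ := Finset.mem_Ico.1 hj
      refine hgreedy j hsj hjK (z i) ?_
      intro m hm hcontra
      rcases lt_or_ge m s with hms | hsm
      · rw [← hagree m hms] at hcontra
        have := hz i m hik (lt_of_lt_of_le hms hsk') hcontra
        omega
      · exact hxB (Finset.mem_image.2 ⟨m, Finset.mem_Ico.2 ⟨hsm, lt_trans hm hjK⟩,
          hcontra.symm⟩)
    have hcard2 : (A \ B).card ≤ (B \ A).card := by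
      have h1 := Finset.card_sdiff_add_card_inter A B
      have h2 := Finset.card_sdiff_add_card_inter B A
      rw [Finset.inter_comm] at h2
      omega
    have hkey : ∑ x ∈ A \ B, u s x ≤ ∑ y ∈ B \ A, u s y := by
      rcases Finset.eq_empty_or_nonempty (B \ A) with hBA | hBA
      · have h0 : (B \ A).card = 0 := by rw [hBA]; simp
        have : A \ B = ∅ := Finset.card_eq_zero.1 (by omega)
        simp [this, hBA]
      · obtain ⟨y, hy, hymin⟩ := Finset.exists_min_image (B \ A) (u s) hBA
        have hyB : y ∈ B := (Finset.mem_sdiff.1 hy).1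
        calc ∑ x ∈ A \ B, u s x ≤ (A \ B).card • u s y :=
              Finset.sum_le_card_nsmul _ _ _ (fun x hx => hle x hx y hyB)
          _ ≤ (B \ A).card • u s y := by
              exact nsmul_le_nsmul_left (hnonneg s y) hcard2
          _ ≤ ∑ x ∈ B \ A, u s x :=
              Finset.card_nsmul_le_sum _ _ _ (fun x hx => hymin x hx)
    calc ∑ x ∈ A, u s x = ∑ x ∈ A ∩ B, u s x + ∑ x ∈ A \ B, u s x := by
          rw [Finset.sum_inter_add_sum_sdiff]
      _ ≤ ∑ x ∈ A ∩ B, u s x + ∑ x ∈ B \ A, u s x := by linarith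
      _ = ∑ x ∈ B, u s x := by rw [Finset.inter_comm, Finset.sum_inter_add_sum_sdiff]
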